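/- Let F be a free group, let u ∈ F be an element that is not a proper power, and let p be a prime. Then the cyclic subgroup ⟨u⟩ is p'-isolated in F: for every x ∈ F, if xᵖ ∈ ⟨u⟩ then x ∈ ⟨u⟩. -/

import Mathlib

/-- An element is not a proper power: `a = w ^ k` forces `|k| ≤ 1`. -/
def NotProperPower {G : Type} [Group G] (a : G) : Prop :=
  ∀ (w : G) (k : ℤ), a = w ^ k → k.natAbs ≤ 1

/-- The abelianization-style map from a free group to `ι →₀ ℤ`. -/
noncomputable def abmap {ι : Type*} : FreeGroup ι →* Multiplicative (ι →₀ ℤ) :=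
  FreeGroup.lift (fun i => Multiplicative.ofAdd (Finsupp.single i 1))

lemma keyA {ι : Type*} (a b : FreeGroup ι) (p n : ℤ) (hp : p ≠ 0)
    (hrel : a ^ p = b ^ n) (hgen : Subgroup.closure ({a, b} : Set (FreeGroup ι)) = ⊤) :
    Subsingleton ι := by
  by_contra hι
  obtain ⟨i, j, hij⟩ : ∃ i j : ι, i ≠ j := by
    by_contra h
    push_neg at h
    exact hι ⟨fun x y => h x y⟩
  set φ : FreeGroup ι →* Multiplicative (ι →₀ ℤ) := abmap
  set A : ι →₀ ℤ := Multiplicative.toAdd (φ a)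
  set B : ι →₀ ℤ := Multiplicative.toAdd (φ b)
  set ψ : (ι →₀ ℤ) →+ (ι →₀ ℚ) := Finsupp.mapRange.addMonoidHom (Int.castAddHom ℚ)
  have hψs : ∀ (k : ι), ψ (Finsupp.single k 1) = Finsupp.single k (1 : ℚ) := by
    intro k
    simp [ψ, Finsupp.mapRange.addMonoidHom, Finsupp.mapRange_single]
    exact Finsupp.mapRange_single
  set B' : ι →₀ ℚ := ψ B
  -- relation in the abelianization
  have hAB : p • A = n • B := by
    have : φ (a ^ p) = φ (b ^ n) := by rw [hrel]
    rw [map_zpow, map_zpow] at this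
    have := congrArg Multiplicative.toAdd this
    simpa using this
  -- every basis vector is a rational multiple of B'
  have key : ∀ k : ι, ∃ c : ℚ, (Finsupp.single k (1 : ℚ)) = c • B' := by
    intro k
    have hk : FreeGroup.of k ∈ Subgroup.closure ({a, b} : Set (FreeGroup ι)) := by
      rw [hgen]; trivial
    have hk2 : φ (FreeGroup.of k) ∈ Subgroup.closure ({φ a, φ b} :
        Set (Multiplicative (ι →₀ ℤ))) := by
      have : φ (FreeGroup.of k) ∈ Subgroup.map φ (Subgroup.closure {a, b}) :=
        Subgroup.mem_map_of_mem _ hk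
      rwa [MonoidHom.map_closure, Set.image_pair] at this
    rw [Subgroup.mem_closure_pair] at hk2
    obtain ⟨m, l, hml⟩ := hk2
    have hml' : m • A + l • B = Finsupp.single k 1 := by
      have := congrArg Multiplicative.toAdd hml
      simp [φ, abmap] at this
      exact this
    have h1 : m • ψ A + l • B' = Finsupp.single k (1 : ℚ) := by
      have := congrArg ψ hml'
      simpa [map_add, map_zsmul, hψs] using this
    -- ψ A is a multiple of B'
    have h2 : (p : ℚ) • ψ A = (n : ℚ) • B' := by
      have := congrArg ψ hAB
      rw [map_zsmul, map_zsmul] at this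
      rw [Int.cast_smul_eq_zsmul, Int.cast_smul_eq_zsmul]
      exact this
    have hpQ : (p : ℚ) ≠ 0 := Int.cast_ne_zero.mpr hp
    have hA' : ψ A = ((p : ℚ)⁻¹ * (n : ℚ)) • B' := by
      have := congrArg (fun v => (p : ℚ)⁻¹ • v) h2
      simp only [smul_smul, inv_mul_cancel₀ hpQ, one_smul] at this
      exact this
    refine ⟨(m : ℚ) * ((p : ℚ)⁻¹ * (n : ℚ)) + (l : ℚ), ?_⟩
    rw [← h1, hA', ← Int.cast_smul_eq_zsmul ℚ m, ← Int.cast_smul_eq_zsmul ℚ l,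
      smul_smul, add_smul]
  obtain ⟨c, hc⟩ := key i
  obtain ⟨d, hd⟩ := key j
  have hci : (1 : ℚ) = c * B' i := by
    have := congrArg (fun v : ι →₀ ℚ => v i) hc
    simpa [Finsupp.single_apply] using this
  have hdi : (0 : ℚ) = d * B' i := by
    have := congrArg (fun v : ι →₀ ℚ => v i) hd
    simpa [Finsupp.single_apply, (Ne.symm hij)] using this
  have hdj : (1 : ℚ) = d * B' j := by
    have := congrArg (fun v : ι →₀ ℚ => v j) hd
    simpa [Finsupp.single_apply] using this
  have hBi : B' i ≠ 0 := by
    intro h; rw [h, mul_zero] at hci; exact one_ne_zero hci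
  have hd0 : d = 0 := by
    rcases mul_eq_zero.mp hdi.symm with h | h
    · exact h
    · exact absurd h hBi
  rw [hd0, zero_mul] at hdj
  exact one_ne_zero hdj

lemma keyB {ι : Type*} (hs : Subsingleton ι) :
    ∃ w : FreeGroup ι, (∀ g : FreeGroup ι, ∃ s : ℤ, g = w ^ s) ∧
      (∀ m : ℤ, w ^ m = 1 → m = 0 ∨ w = 1) := by
  by_cases hne : Nonempty ι
  · obtain ⟨i⟩ := hne
    refine ⟨FreeGroup.of i, ?_, ?_⟩
    · intro g
      have hg : g ∈ Subgroup.zpowers (FreeGroup.of i) := by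
        have hle : Subgroup.closure (Set.range (FreeGroup.of : ι → FreeGroup ι)) ≤
            Subgroup.zpowers (FreeGroup.of i) := by
          rw [Subgroup.closure_le]
          rintro _ ⟨k, rfl⟩
          have : k = i := Subsingleton.elim k i
          rw [this]
          exact ⟨1, by simp⟩
        exact hle (by rw [FreeGroup.closure_range_of]; trivial)
      obtain ⟨s, hs'⟩ := hg
      exact ⟨s, hs'.symm⟩
    · intro m hm
      left
      have := congrArg (abmap (ι := ι)) hm
      rw [map_zpow, map_one] at this
      have h2 : m • (Finsupp.single i (1 : ℤ)) = 0 := by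
        have := congrArg Multiplicative.toAdd this
        simpa [abmap] using this
      rw [Finsupp.smul_single] at h2
      have := Finsupp.single_eq_zero.mp h2
      simpa using this
  · refine ⟨1, ?_, fun m _ => Or.inr rfl⟩
    intro g
    refine ⟨0, ?_⟩
    have hg : g ∈ Subgroup.closure (Set.range (FreeGroup.of : ι → FreeGroup ι)) := by
      rw [FreeGroup.closure_range_of]; trivial
    have hr : (Set.range (FreeGroup.of : ι → FreeGroup ι)) = ∅ := by
      simp [Set.range_eq_empty_iff, not_nonempty_iff.mp hne]
    rw [hr, Subgroup.closure_empty, Subgroup.mem_bot] at hg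
    simp [hg]

lemma keyC (G : Type*) [Group G] [IsFreeGroup G] (a b : G) (p n : ℤ) (hp : p ≠ 0)
    (hrel : a ^ p = b ^ n) (hgen : Subgroup.closure ({a, b} : Set G) = ⊤) :
    ∃ w : G, (∀ g : G, ∃ s : ℤ, g = w ^ s) ∧ (∀ m : ℤ, m ≠ 0 → w ^ m = 1 → w = 1) := by
  set e : G ≃* FreeGroup (IsFreeGroup.Generators G) := IsFreeGroup.toFreeGroup G
  have hgen' : Subgroup.closure ({e a, e b} : Set (FreeGroup (IsFreeGroup.Generators G))) = ⊤ := by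
    have : Subgroup.map (e : G →* FreeGroup (IsFreeGroup.Generators G)) (Subgroup.closure {a, b})
        = ⊤ := by
      rw [hgen]
      exact Subgroup.map_top_of_surjective _ e.surjective
    rwa [MonoidHom.map_closure, Set.image_pair] at this
  have hrel' : (e a) ^ p = (e b) ^ n := by
    rw [← map_zpow, ← map_zpow, hrel]
  have hsub := keyA (e a) (e b) p n hp hrel' hgen'
  obtain ⟨w', hw1, hw2⟩ := keyB hsub
  refine ⟨e.symm w', ?_, ?_⟩
  · intro g
    obtain ⟨s, hs⟩ := hw1 (e g)
    refine ⟨s, ?_⟩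
    have := congrArg e.symm hs
    rwa [MulEquiv.symm_apply_apply, map_zpow] at this
  · intro m hm hwm
    have : w' ^ m = 1 := by
      have := congrArg e hwm
      rwa [map_zpow, MulEquiv.apply_symm_apply, map_one] at this
    rcases hw2 m this with h | h
    · exact absurd h hm
    · rw [h, map_one]

theorem stmt6 {α : Type} (u : FreeGroup α) (hu : NotProperPower u)
    (p : ℕ) (hp : p.Prime) :
    ∀ x : FreeGroup α, x ^ p ∈ Subgroup.zpowers u → x ∈ Subgroup.zpowers u := by
  intro x hx
  obtain ⟨n, hn⟩ := hx
  -- hn : u ^ n = x ^ p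
  set H : Subgroup (FreeGroup α) := Subgroup.closure {x, u} with hH
  have hxH : x ∈ H := Subgroup.subset_closure (by simp)
  have huH : u ∈ H := Subgroup.subset_closure (by simp)
  set xh : H := ⟨x, hxH⟩
  set uh : H := ⟨u, huH⟩
  have hgen : Subgroup.closure ({xh, uh} : Set H) = ⊤ := by
    have hset : ({xh, uh} : Set H) = ((↑) : H → FreeGroup α) ⁻¹' {x, u} := by
      ext ⟨g, hg⟩
      simp [xh, uh, Subtype.ext_iff]
    rw [hset]
    exact Subgroup.closure_closure_coe_preimage
  have hp0 : (p : ℤ) ≠ 0 := by exact_mod_cast hp.ne_zero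
  have hrel : xh ^ (p : ℤ) = uh ^ n := by
    apply Subtype.ext
    push_cast
    rw [zpow_natCast]
    exact hn.symm
  obtain ⟨w, hw1, hw2⟩ := keyC H xh uh (p : ℤ) n hp0 hrel hgen
  obtain ⟨s, hs⟩ := hw1 xh
  obtain ⟨t, ht⟩ := hw1 uh
  have hxF : x = (w : FreeGroup α) ^ s := by
    have := congrArg (Subtype.val) hs
    simpa using this
  have huF : u = (w : FreeGroup α) ^ t := by
    have := congrArg (Subtype.val) ht
    simpa using this
  have htabs : t.natAbs ≤ 1 := hu _ t huF
  have ht3 : t = 0 ∨ t = 1 ∨ t = -1 := by omega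
  rcases ht3 with h0 | h1 | hm1
  · -- u = 1, show x = 1
    have hu1 : uh = 1 := by rw [ht, h0, zpow_zero]
    have hx1 : xh = 1 := by
      have hwsp : w ^ (s * (p : ℤ)) = 1 := by
        rw [zpow_mul, ← hs, hrel, hu1, one_zpow]
      by_cases hs0 : s = 0
      · rw [hs, hs0, zpow_zero]
      · have hsp0 : s * (p : ℤ) ≠ 0 := mul_ne_zero hs0 hp0
        have := hw2 _ hsp0 hwsp
        rw [hs, this, one_zpow]
    have : x = 1 := by
      have := congrArg (Subtype.val) hx1
      simpa [xh] using this
    rw [this]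
    exact Subgroup.one_mem _
  · refine ⟨s, ?_⟩
    show u ^ s = x
    rw [hxF, huF, h1, zpow_one]
  · refine ⟨-s, ?_⟩
    show u ^ (-s) = x
    rw [hxF, huF, hm1, ← zpow_mul]
    norm_num
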